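/- The annealed statistical pressure at finite size N admits the Gaussian-linearized representation A^A_N(β) = (1/N) E_h log E_{x,y,w} ∏_{i=1}^N Σ_{s∈Ω} exp[ s²( −βD + (βJ/√(2N)) w + √(βK/N) y ) + s( β h_i + √(βJ₀/N) x ) ], where x, y, w are independent standard Gaussian random variables, independent of the fields h. -/

import Mathlib

open MeasureTheory ProbabilityTheory Filter Real

noncomputable section

/-- Spin values for spin `S = M/2`: `Ω = {-1 + γ/S : γ = 0,…,2S} = {-1 + 2γ/M : γ = 0,…,M}`. -/
def spinVal (M : ℕ) (γ : Fin (M + 1)) : ℝ := -1 + 2 * (γ : ℝ) / (M : ℝ)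

/-- Standard Gaussian measure `N(0,1)` on ℝ. -/
def stdG : Measure ℝ := gaussianReal 0 1

instance : IsProbabilityMeasure stdG :=
  inferInstanceAs (IsProbabilityMeasure (gaussianReal 0 1))

/-- Law of the i.i.d. standard Gaussian couplings `(z i j)`. -/
def gaussMat (N : ℕ) : Measure (Fin N → Fin N → ℝ) :=
  Measure.pi fun _ => Measure.pi fun _ => stdG

/-- Law of an i.i.d. standard Gaussian vector `(z i)`. -/
def gaussVec (N : ℕ) : Measure (Fin N → ℝ) := Measure.pi fun _ => stdG

/-- Law of the i.i.d. random external fields, with single-site law `P`. -/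
def fieldMeasure (P : Measure ℝ) (N : ℕ) : Measure (Fin N → ℝ) := Measure.pi fun _ => P

/-- The unified inverse-freezing Hamiltonian
`H_N(s|z,h) = −(J/√(2N)) Σ_{i,j} z_{ij} s_i s_j − (J₀/(2N)) Σ_{i,j} s_i s_j + D Σ_i s_i²
  − Σ_i h_i s_i − (K/(2N)) Σ_{i,j} s_i² s_j²`. -/
def hamiltonian (M N : ℕ) (J J₀ D K : ℝ)
    (z : Fin N → Fin N → ℝ) (h : Fin N → ℝ) (s : Fin N → Fin (M + 1)) : ℝ :=
  - (J / Real.sqrt (2 * (N : ℝ))) *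
      ∑ i, ∑ j, z i j * spinVal M (s i) * spinVal M (s j)
  - (J₀ / (2 * (N : ℝ))) * ∑ i, ∑ j, spinVal M (s i) * spinVal M (s j)
  + D * ∑ i, (spinVal M (s i)) ^ 2
  - ∑ i, h i * spinVal M (s i)
  - (K / (2 * (N : ℝ))) * ∑ i, ∑ j, (spinVal M (s i)) ^ 2 * (spinVal M (s j)) ^ 2

/-- Partition function `Z_N(β|z,h)`. -/
def partitionFn (M N : ℕ) (β J J₀ D K : ℝ)
    (z : Fin N → Fin N → ℝ) (h : Fin N → ℝ) : ℝ :=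
  ∑ s : Fin N → Fin (M + 1), Real.exp (-(β * hamiltonian M N J J₀ D K z h s))

/-- Quenched statistical pressure `A^Q_N(β) = (1/N) E_{h} E_{z} log Z_N(β|z,h)`. -/
def quenchedPressure (M N : ℕ) (β J J₀ D K : ℝ) (P : Measure ℝ) : ℝ :=
  (1 / (N : ℝ)) * ∫ h, ∫ z, Real.log (partitionFn M N β J J₀ D K z h)
      ∂(gaussMat N) ∂(fieldMeasure P N)

/-- Annealed statistical pressure `A^A_N(β) = (1/N) E_h log E_z Z_N(β|z,h)`. -/
def annealedPressure (M N : ℕ) (β J J₀ D K : ℝ) (P : Measure ℝ) : ℝ :=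
  (1 / (N : ℝ)) * ∫ h, Real.log (∫ z, partitionFn M N β J J₀ D K z h ∂(gaussMat N))
      ∂(fieldMeasure P N)

lemma exp_quad_eq {b : ℝ} (hb : 0 < b) (c : ℝ) (x : ℝ) :
    Real.exp (-b * x ^ 2 + c * x)
      = Real.exp (c ^ 2 / (4 * b)) * Real.exp (-b * (x - c / (2 * b)) ^ 2) := by
  rw [← Real.exp_add]
  congr 1
  field_simp
  ring

lemma integrable_exp_quad {b : ℝ} (hb : 0 < b) (c : ℝ) :
    Integrable (fun x : ℝ => Real.exp (-b * x ^ 2 + c * x)) := by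
  simp_rw [exp_quad_eq hb c]
  exact (((integrable_exp_neg_mul_sq hb).comp_sub_right (c / (2 * b)))).const_mul _

lemma integral_exp_quad {b : ℝ} (hb : 0 < b) (c : ℝ) :
    ∫ x : ℝ, Real.exp (-b * x ^ 2 + c * x)
      = Real.sqrt (π / b) * Real.exp (c ^ 2 / (4 * b)) := by
  simp_rw [exp_quad_eq hb c]
  rw [integral_const_mul,
    integral_sub_right_eq_self (fun x : ℝ => Real.exp (-b * x ^ 2)) (c / (2 * b)),
    integral_gaussian]
  ring

lemma stdG_eq : stdG = volume.withDensity (gaussianPDF 0 1) := by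
  rw [stdG, gaussianReal_of_var_ne_zero]
  norm_num

lemma stdG_pdf_mul (t : ℝ) (x : ℝ) :
    gaussianPDFReal 0 1 x * Real.exp (t * x)
      = (Real.sqrt (2 * π))⁻¹ * Real.exp (-(1/2 : ℝ) * x ^ 2 + t * x) := by
  have h1 : gaussianPDFReal 0 1 x = (Real.sqrt (2 * π))⁻¹ * Real.exp (-(1/2 : ℝ) * x ^ 2) := by
    rw [gaussianPDFReal]
    norm_num
    exact Or.inl (by ring)
  rw [h1, mul_assoc, ← Real.exp_add]

lemma stdG_integral_exp (t : ℝ) :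
    ∫ x, Real.exp (t * x) ∂stdG = Real.exp (t ^ 2 / 2) := by
  have hmeas : Measurable fun x : ℝ => Real.toNNReal (gaussianPDFReal 0 1 x) :=
    (measurable_gaussianPDFReal 0 1).real_toNNReal
  have hd : gaussianPDF 0 1 = fun x => ((Real.toNNReal (gaussianPDFReal 0 1 x) : NNReal) : ENNReal) := by
    funext x; rfl
  rw [stdG_eq, hd, integral_withDensity_eq_integral_smul hmeas]
  have : ∀ x : ℝ, (Real.toNNReal (gaussianPDFReal 0 1 x) : NNReal) • Real.exp (t * x)
      = (Real.sqrt (2 * π))⁻¹ * Real.exp (-(1/2 : ℝ) * x ^ 2 + t * x) := by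
    intro x
    rw [NNReal.smul_def, smul_eq_mul, Real.coe_toNNReal _ (gaussianPDFReal_nonneg 0 1 x),
      stdG_pdf_mul]
  simp_rw [this]
  rw [integral_const_mul, integral_exp_quad (by norm_num) t]
  have h2 : π / (1/2 : ℝ) = 2 * π := by ring
  have h4 : t ^ 2 / (4 * (1/2 : ℝ)) = t ^ 2 / 2 := by ring
  rw [h2, h4, ← mul_assoc, inv_mul_cancel₀ (by positivity : Real.sqrt (2 * π) ≠ 0), one_mul]

lemma stdG_integrable_exp (t : ℝ) :
    Integrable (fun x => Real.exp (t * x)) stdG := by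
  rw [stdG_eq, integrable_withDensity_iff (measurable_gaussianPDF 0 1)
    (Filter.Eventually.of_forall fun x => ENNReal.ofReal_lt_top)]
  have : ∀ x : ℝ, Real.exp (t * x) * (gaussianPDF 0 1 x).toReal
      = (Real.sqrt (2 * π))⁻¹ * Real.exp (-(1/2 : ℝ) * x ^ 2 + t * x) := by
    intro x
    rw [gaussianPDF, ENNReal.toReal_ofReal (gaussianPDFReal_nonneg 0 1 x), mul_comm,
      stdG_pdf_mul]
  simp_rw [this]
  exact (integrable_exp_quad (by norm_num) t).const_mul _

/-- Type synonym for `ℝ` carrying the standard Gaussian as its volume. -/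
def GW : Type := ℝ

instance : MeasurableSpace GW := inferInstanceAs (MeasurableSpace ℝ)
instance : MeasureSpace GW :=
  { toMeasurableSpace := inferInstanceAs (MeasurableSpace ℝ), volume := stdG }
instance : IsProbabilityMeasure (volume : Measure GW) :=
  inferInstanceAs (IsProbabilityMeasure stdG)

lemma integral_gaussVec_prod (N : ℕ) (f : Fin N → ℝ → ℝ) :
    ∫ v, ∏ i, f i (v i) ∂(gaussVec N) = ∏ i, ∫ x, f i x ∂stdG :=
  MeasureTheory.integral_fintype_prod_eq_prod (E := fun _ : Fin N => ℝ) (μ := fun _ => stdG) f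

lemma integrable_gaussVec_prod {N : ℕ} {f : Fin N → ℝ → ℝ}
    (h : ∀ i, Integrable (f i) stdG) :
    Integrable (fun v : Fin N → ℝ => ∏ i, f i (v i)) (gaussVec N) :=
  MeasureTheory.Integrable.fintype_prod_dep (E := fun _ : Fin N => ℝ) (μ := fun _ => stdG) h

lemma integral_gaussMat_prod (N : ℕ) (f : Fin N → (Fin N → ℝ) → ℝ) :
    ∫ z, ∏ i, f i (z i) ∂(gaussMat N) = ∏ i, ∫ v, f i v ∂(gaussVec N) :=
  MeasureTheory.integral_fintype_prod_eq_prod (E := fun _ : Fin N => Fin N → ℝ)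
    (μ := fun _ => Measure.pi fun _ => stdG) f

lemma integrable_gaussMat_prod {N : ℕ} {f : Fin N → (Fin N → ℝ) → ℝ}
    (h : ∀ i, Integrable (f i) (gaussVec N)) :
    Integrable (fun z : Fin N → Fin N → ℝ => ∏ i, f i (z i)) (gaussMat N) :=
  MeasureTheory.Integrable.fintype_prod_dep (E := fun _ : Fin N => Fin N → ℝ)
    (μ := fun _ => Measure.pi fun _ => stdG) h

lemma int_sum_exp {ι : Type*} [Fintype ι] (a c : ι → ℝ) :
    ∫ u, (∑ s, Real.exp (a s + c s * u)) ∂stdG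
      = ∑ s, Real.exp (a s + (c s) ^ 2 / 2) := by
  rw [integral_finset_sum]
  · refine Finset.sum_congr rfl fun s _ => ?_
    simp_rw [Real.exp_add]
    rw [integral_const_mul, stdG_integral_exp]
  · intro s _
    simp_rw [Real.exp_add]
    exact (stdG_integrable_exp (c s)).const_mul _

lemma gauss_lin_LHS (M N : ℕ) (B : (Fin N → Fin (M+1)) → ℝ)
    (a : (Fin N → Fin (M+1)) → Fin N → Fin N → ℝ) :
    ∫ z, (∑ s : Fin N → Fin (M+1),
        Real.exp (B s) * ∏ i, ∏ j, Real.exp (a s i j * z i j)) ∂(gaussMat N)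
      = ∑ s : Fin N → Fin (M+1),
          Real.exp (B s) * Real.exp (∑ i, ∑ j, (a s i j)^2/2) := by
  rw [integral_finset_sum _ (fun s _ =>
    (integrable_gaussMat_prod (f := fun i v => ∏ j, Real.exp (a s i j * v j))
      (fun i => integrable_gaussVec_prod (fun j => stdG_integrable_exp _))).const_mul _)]
  refine Finset.sum_congr rfl fun s _ => ?_
  rw [integral_const_mul]
  congr 1
  calc (∫ z, ∏ i, ∏ j, Real.exp (a s i j * z i j) ∂(gaussMat N))
      = ∏ i, ∫ v, ∏ j, Real.exp (a s i j * v j) ∂(gaussVec N) :=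
        integral_gaussMat_prod N (fun i v => ∏ j, Real.exp (a s i j * v j))
    _ = ∏ i, ∏ j, ∫ u, Real.exp (a s i j * u) ∂stdG :=
        Finset.prod_congr rfl fun i _ =>
          integral_gaussVec_prod N (fun j u => Real.exp (a s i j * u))
    _ = ∏ i, ∏ j, Real.exp ((a s i j)^2/2) := by
        simp_rw [stdG_integral_exp]
    _ = Real.exp (∑ i, ∑ j, (a s i j)^2/2) := by
        rw [Real.exp_sum]
        exact Finset.prod_congr rfl fun i _ => (Real.exp_sum _ _).symm

set_option maxHeartbeats 2000000 in
lemma key_inner (M N : ℕ) (hN : 0 < N)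
    (β J J₀ D K : ℝ) (hβ : 0 < β) (hK : 0 ≤ K) (hJ₀ : 0 ≤ J₀) (h : Fin N → ℝ) :
    ∫ z, partitionFn M N β J J₀ D K z h ∂(gaussMat N)
      = ∫ x, ∫ y, ∫ w,
          ∏ i : Fin N, ∑ γ : Fin (M + 1),
            Real.exp ((spinVal M γ) ^ 2 *
                (-(β * D) + (β * J / Real.sqrt (2 * (N : ℝ))) * w
                  + Real.sqrt (β * K / (N : ℝ)) * y)
              + spinVal M γ * (β * h i + Real.sqrt (β * J₀ / (N : ℝ)) * x))
          ∂stdG ∂stdG ∂stdG := by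
  have hNR : (0:ℝ) < (N:ℝ) := by exact_mod_cast hN
  set c1 : ℝ := β * J / Real.sqrt (2 * (N:ℝ)) with hc1
  set c2 : ℝ := Real.sqrt (β * K / (N:ℝ)) with hc2
  set c3 : ℝ := Real.sqrt (β * J₀ / (N:ℝ)) with hc3
  set q : (Fin N → Fin (M+1)) → ℝ := fun s => ∑ i, (spinVal M (s i))^2 with hq
  set l : (Fin N → Fin (M+1)) → ℝ := fun s => ∑ i, spinVal M (s i) with hl
  set ht : (Fin N → Fin (M+1)) → ℝ := fun s => ∑ i, h i * spinVal M (s i) with hht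
  have hc2sq : c2^2 = β*K/(N:ℝ) := Real.sq_sqrt (by positivity)
  have hc3sq : c3^2 = β*J₀/(N:ℝ) := Real.sq_sqrt (by positivity)
  have hc1sq : c1^2 = (β*J)^2/(2*(N:ℝ)) := by
    rw [hc1, div_pow, Real.sq_sqrt (by positivity : (0:ℝ) ≤ 2*(N:ℝ))]
  -- RHS computation
  have hR2 : ∀ (s : Fin N → Fin (M+1)) (x y w : ℝ),
      (∑ i, ((spinVal M (s i))^2 * (-(β*D) + c1*w + c2*y)
        + spinVal M (s i) * (β*h i + c3*x)))
      = ((-(β*D)*q s + β*ht s + c3*l s*x + c2*q s*y) + (c1*q s)*w) := by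
    intro s x y w
    calc (∑ i, ((spinVal M (s i))^2 * (-(β*D) + c1*w + c2*y)
        + spinVal M (s i) * (β*h i + c3*x)))
        = ∑ i, ((spinVal M (s i))^2*(-(β*D)) + (spinVal M (s i))^2*(c1*w)
            + (spinVal M (s i))^2*(c2*y) + β*(h i * spinVal M (s i))
            + spinVal M (s i)*(c3*x)) := Finset.sum_congr rfl (fun i _ => by ring)
      _ = q s*(-(β*D)) + q s*(c1*w) + q s*(c2*y) + β*ht s + l s*(c3*x) := by
          simp only [hq, hl, hht, Finset.sum_add_distrib, ← Finset.sum_mul, ← Finset.mul_sum]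
      _ = _ := by ring
  have hR1 : ∀ x y w : ℝ,
      (∏ i : Fin N, ∑ γ : Fin (M + 1),
        Real.exp ((spinVal M γ)^2 * (-(β*D) + c1*w + c2*y)
          + spinVal M γ * (β*h i + c3*x)))
      = ∑ s : Fin N → Fin (M+1),
          Real.exp ((-(β*D)*q s + β*ht s + c3*l s*x + c2*q s*y) + (c1*q s)*w) := by
    intro x y w
    rw [Fintype.prod_sum]
    refine Finset.sum_congr rfl fun s _ => ?_
    rw [← Real.exp_sum, hR2 s x y w]
  have hw : ∀ x y : ℝ,
      (∫ w, (∏ i : Fin N, ∑ γ : Fin (M + 1),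
        Real.exp ((spinVal M γ)^2 * (-(β*D) + c1*w + c2*y)
          + spinVal M γ * (β*h i + c3*x))) ∂stdG)
      = ∑ s : Fin N → Fin (M+1),
          Real.exp ((-(β*D)*q s + β*ht s + c3*l s*x + (c1*q s)^2/2) + (c2*q s)*y) := by
    intro x y
    simp_rw [hR1]
    rw [int_sum_exp]
    exact Finset.sum_congr rfl fun s _ => by rw [show
      ((-(β*D)*q s + β*ht s + c3*l s*x + c2*q s*y) + (c1*q s)^2/2)
      = ((-(β*D)*q s + β*ht s + c3*l s*x + (c1*q s)^2/2) + (c2*q s)*y) from by ring]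
  have hy : ∀ x : ℝ,
      (∫ y, (∑ s : Fin N → Fin (M+1),
          Real.exp ((-(β*D)*q s + β*ht s + c3*l s*x + (c1*q s)^2/2) + (c2*q s)*y)) ∂stdG)
      = ∑ s : Fin N → Fin (M+1),
          Real.exp ((-(β*D)*q s + β*ht s + (c1*q s)^2/2 + (c2*q s)^2/2) + (c3*l s)*x) := by
    intro x
    rw [int_sum_exp]
    exact Finset.sum_congr rfl fun s _ => by rw [show
      ((-(β*D)*q s + β*ht s + c3*l s*x + (c1*q s)^2/2) + (c2*q s)^2/2)
      = ((-(β*D)*q s + β*ht s + (c1*q s)^2/2 + (c2*q s)^2/2) + (c3*l s)*x) from by ring]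
  have hRHS :
      (∫ x, ∫ y, ∫ w,
        ∏ i : Fin N, ∑ γ : Fin (M + 1),
          Real.exp ((spinVal M γ)^2 * (-(β*D) + c1*w + c2*y)
            + spinVal M γ * (β*h i + c3*x)) ∂stdG ∂stdG ∂stdG)
      = ∑ s : Fin N → Fin (M+1),
          Real.exp ((-(β*D)*q s + β*ht s + (c1*q s)^2/2 + (c2*q s)^2/2) + (c3*l s)^2/2) := by
    simp_rw [hw, hy]
    rw [int_sum_exp]
  -- LHS computation
  have hz : ∀ (z : Fin N → Fin N → ℝ) (s : Fin N → Fin (M+1)),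
      β * (J / Real.sqrt (2*(N:ℝ)))
        * (∑ i, ∑ j, z i j * spinVal M (s i) * spinVal M (s j))
      = ∑ i, ∑ j, (c1 * (spinVal M (s i) * spinVal M (s j))) * z i j := by
    intro z s
    rw [Finset.mul_sum]
    refine Finset.sum_congr rfl fun i _ => ?_
    rw [Finset.mul_sum]
    exact Finset.sum_congr rfl fun j _ => by rw [hc1]; ring
  have hHam : ∀ (z : Fin N → Fin N → ℝ) (s : Fin N → Fin (M+1)),
      -(β * hamiltonian M N J J₀ D K z h s)
      = (β*(J₀/(2*(N:ℝ))) * (∑ i, ∑ j, spinVal M (s i) * spinVal M (s j))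
          + (-(β*D))*q s + β*ht s
          + β*(K/(2*(N:ℝ))) * (∑ i, ∑ j, (spinVal M (s i))^2*(spinVal M (s j))^2))
        + ∑ i, ∑ j, (c1 * (spinVal M (s i) * spinVal M (s j))) * z i j := by
    intro z s
    rw [← hz z s, hamiltonian]
    simp only [hq, hht]
    ring
  have hsplit : ∀ (z : Fin N → Fin N → ℝ) (s : Fin N → Fin (M+1)),
      Real.exp (-(β * hamiltonian M N J J₀ D K z h s))
      = Real.exp (β*(J₀/(2*(N:ℝ))) * (∑ i, ∑ j, spinVal M (s i) * spinVal M (s j))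
          + (-(β*D))*q s + β*ht s
          + β*(K/(2*(N:ℝ))) * (∑ i, ∑ j, (spinVal M (s i))^2*(spinVal M (s j))^2))
        * ∏ i, ∏ j, Real.exp ((c1 * (spinVal M (s i) * spinVal M (s j))) * z i j) := by
    intro z s
    rw [hHam, Real.exp_add]
    congr 1
    rw [Real.exp_sum]
    exact Finset.prod_congr rfl fun i _ => Real.exp_sum _ _
  have hqq : ∀ s : Fin N → Fin (M+1), q s * q s
      = ∑ i, ∑ j, (spinVal M (s i))^2 * (spinVal M (s j))^2 := by
    intro s
    rw [hq]
    exact Finset.sum_mul_sum _ _ _ _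
  have hll : ∀ s : Fin N → Fin (M+1), l s * l s
      = ∑ i, ∑ j, spinVal M (s i) * spinVal M (s j) := by
    intro s
    rw [hl]
    exact Finset.sum_mul_sum _ _ _ _
  have hLHS : ∫ z, partitionFn M N β J J₀ D K z h ∂(gaussMat N)
      = ∑ s : Fin N → Fin (M+1),
          Real.exp (β*(J₀/(2*(N:ℝ))) * (∑ i, ∑ j, spinVal M (s i) * spinVal M (s j))
            + (-(β*D))*q s + β*ht s
            + β*(K/(2*(N:ℝ))) * (∑ i, ∑ j, (spinVal M (s i))^2*(spinVal M (s j))^2))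
          * Real.exp (∑ i, ∑ j, (c1 * (spinVal M (s i) * spinVal M (s j)))^2/2) := by
    simp only [partitionFn]
    simp_rw [hsplit]
    exact gauss_lin_LHS M N _ (fun s i j => c1 * (spinVal M (s i) * spinVal M (s j)))
  have hsum : ∀ s : Fin N → Fin (M+1),
      (∑ i, ∑ j, (c1 * (spinVal M (s i) * spinVal M (s j)))^2/2) = c1^2/2*(q s*q s) := by
    intro s
    rw [hqq s, Finset.mul_sum]
    refine Finset.sum_congr rfl fun i _ => ?_
    rw [Finset.mul_sum]
    exact Finset.sum_congr rfl fun j _ => by ring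
  rw [hLHS, hRHS]
  refine Finset.sum_congr rfl fun s _ => ?_
  rw [← Real.exp_add]
  congr 1
  rw [hsum, ← hll, ← hqq, mul_pow, mul_pow, mul_pow, hc1sq, hc2sq, hc3sq]
  field_simp
  ring

/-- the annealed statistical pressure at finite size `N` admits the
Gaussian-linearized representation with three auxiliary independent standard Gaussians
`x, y, w` (independent of the fields `h`). -/
theorem annealed_gaussian_linearization
    (M N : ℕ) (hM : 1 ≤ M) (hN : 0 < N)
    (β J J₀ D K : ℝ) (hβ : 0 < β) (hJ : 0 ≤ J) (hJ₀ : 0 ≤ J₀) (hK : 0 ≤ K)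
    (P : Measure ℝ) [IsProbabilityMeasure P]
    (hP : ∀ t : ℝ, Integrable (fun x => Real.exp (t * x)) P) :
    annealedPressure M N β J J₀ D K P
      = (1 / (N : ℝ)) * ∫ h, Real.log (∫ x, ∫ y, ∫ w,
          ∏ i : Fin N, ∑ γ : Fin (M + 1),
            Real.exp ((spinVal M γ) ^ 2 *
                (-(β * D) + (β * J / Real.sqrt (2 * (N : ℝ))) * w
                  + Real.sqrt (β * K / (N : ℝ)) * y)
              + spinVal M γ * (β * h i + Real.sqrt (β * J₀ / (N : ℝ)) * x))
          ∂stdG ∂stdG ∂stdG) ∂(fieldMeasure P N) := by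
  simp only [annealedPressure]
  congr 1
  exact integral_congr_ae (Filter.Eventually.of_forall fun h =>
    congrArg Real.log (key_inner M N hN β J J₀ D K hβ hK hJ₀ h))
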